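/- (Support and values of the Hasse derivatives of the coordinate function z of the Ree curve.) The polynomial p_z satisfies: D^1 p_z = X^(2q0); D^q0 p_z = X^(q+q0) - X^(q0+1); D^(q0+1) p_z = -X^q0; D^(2q0) p_z = X - X^q; D^(2q0+1) p_z = 1; D^q p_z = X^(2q*q0) - X^(2q0); D^(q+q0) p_z = X^q0; D^(q+2q0) p_z = -1; D^(q*q0) p_z = X^(q^2+q*q0) - X^(q*q0+q); D^(q*q0+q) p_z = -X^(q*q0); D^(2q*q0) p_z = X^q - X^(q^2); D^(2q*q0+q) p_z = 1; and D^i p_z = 0 for every integer i with 1 ≤ i ≤ q^2 - 1 and i ∉ {1, q0, q0+1, 2q0, 2q0+1, q, q+q0, q+2q0, q*q0, q*q0+q, 2q*q0, 2q*q0+q}. -/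

import Mathlib

noncomputable section

open Polynomial

abbrev F := ZMod 3

def q0 (s : ℕ) : ℕ := 3 ^ s
def q (s : ℕ) : ℕ := 3 ^ (2 * s + 1)

def pX : Polynomial F := X
def pY (s : ℕ) : Polynomial F :=
  X ^ (q0 s + 1) - X ^ (q s + q0 s) + X ^ (q s * (q0 s + 1)) - X ^ (q s * (q s + q0 s))
def pZ (s : ℕ) : Polynomial F :=
  X ^ (2 * q0 s + 1) - X ^ (q s + 2 * q0 s) + X ^ (q s * (2 * q0 s + 1)) - X ^ (q s * (q s + 2 * q0 s))
def ell (s : ℕ) : Polynomial F := X ^ q s - X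

lemma lucas_pow {p : ℕ} [hp : Fact p.Prime] (a n k : ℕ) :
    ((n.choose k : ZMod p)) = ((n / p ^ a).choose (k / p ^ a) : ZMod p) *
      ((n % p ^ a).choose (k % p ^ a) : ZMod p) := by
  have hp1 : 1 < p := hp.out.one_lt
  induction a generalizing n k with
  | zero => simp [Nat.mod_one]
  | succ a ih =>
    have base : ∀ m l : ℕ, ((m.choose l : ZMod p)) =
        ((m % p).choose (l % p) : ZMod p) * ((m / p).choose (l / p) : ZMod p) := by
      intro m l
      have h := (Choose.choose_modEq_choose_mod_mul_choose_div_nat (p := p) (n := m) (k := l))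
      have := (ZMod.natCast_eq_natCast_iff _ _ _).mpr h
      push_cast at this
      exact this
    have e1 : n / p ^ (a + 1) = (n / p) / p ^ a := by
      rw [Nat.div_div_eq_div_mul, _root_.pow_succ']
    have e2 : k / p ^ (a + 1) = (k / p) / p ^ a := by
      rw [Nat.div_div_eq_div_mul, _root_.pow_succ']
    have e3 : (n % p ^ (a + 1)) % p = n % p :=
      Nat.mod_mod_of_dvd _ (dvd_pow_self p (Nat.succ_ne_zero a))
    have e4 : (k % p ^ (a + 1)) % p = k % p :=
      Nat.mod_mod_of_dvd _ (dvd_pow_self p (Nat.succ_ne_zero a))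
    have e5 : (n % p ^ (a + 1)) / p = (n / p) % p ^ a := by
      rw [_root_.pow_succ', Nat.mod_mul_right_div_self]
    have e6 : (k % p ^ (a + 1)) / p = (k / p) % p ^ a := by
      rw [_root_.pow_succ', Nat.mod_mul_right_div_self]
    rw [base n k, ih (n / p) (k / p), base (n % p ^ (a+1)) (k % p ^ (a+1)),
      e1, e2, e3, e4, e5, e6]
    ring

lemma master (u v e f i : ℕ) (hu : u ≤ 2) (hef : e < f) :
    (((u * 3 ^ e + v * 3 ^ f).choose i : ZMod 3)) =
      (v.choose (i / 3 ^ f) : ZMod 3) * (u.choose (i % 3 ^ f / 3 ^ e) : ZMod 3) *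
        (if i % 3 ^ e = 0 then 1 else 0) := by
  have h1 : u * 3 ^ e < 3 ^ f := by
    calc u * 3 ^ e ≤ 2 * 3 ^ e := Nat.mul_le_mul_right _ hu
    _ < 3 * 3 ^ e := by have := Nat.pos_of_ne_zero (pow_ne_zero e (show (3:ℕ) ≠ 0 by norm_num)); nlinarith
    _ = 3 ^ (e + 1) := by ring
    _ ≤ 3 ^ f := Nat.pow_le_pow_right (by norm_num) hef
  have hd : (u * 3 ^ e + v * 3 ^ f) / 3 ^ f = v := by
    rw [Nat.add_mul_div_right _ _ (Nat.pos_of_ne_zero (pow_ne_zero f (show (3:ℕ) ≠ 0 by norm_num))),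
      Nat.div_eq_of_lt h1, Nat.zero_add]
  have hm : (u * 3 ^ e + v * 3 ^ f) % 3 ^ f = u * 3 ^ e := by
    rw [Nat.add_mul_mod_self_right, Nat.mod_eq_of_lt h1]
  rw [lucas_pow f, hd, hm, lucas_pow e (u * 3 ^ e) (i % 3 ^ f),
    Nat.mul_div_cancel _ (Nat.pos_of_ne_zero (pow_ne_zero e (show (3:ℕ) ≠ 0 by norm_num))), Nat.mul_mod_left,
    Nat.mod_mod_of_dvd _ (pow_dvd_pow 3 hef.le)]
  rcases eq_or_ne (i % 3 ^ e) 0 with h | h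
  · rw [h, if_pos rfl]; simp [mul_comm]
  · rw [if_neg h, Nat.choose_eq_zero_of_lt (Nat.pos_of_ne_zero h)]
    push_cast; ring

lemma master_val (u v e f m j : ℕ) (hu : u ≤ 2) (hm : m ≤ 2) (hef : e < f) :
    (((u * 3 ^ e + v * 3 ^ f).choose (m * 3 ^ e + j * 3 ^ f) : ZMod 3)) =
      (u.choose m : ZMod 3) * (v.choose j : ZMod 3) := by
  have h1 : m * 3 ^ e < 3 ^ f := by
    calc m * 3 ^ e ≤ 2 * 3 ^ e := Nat.mul_le_mul_right _ hm
    _ < 3 * 3 ^ e := by have := Nat.pos_of_ne_zero (pow_ne_zero e (show (3:ℕ) ≠ 0 by norm_num)); nlinarith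
    _ = 3 ^ (e + 1) := by ring
    _ ≤ 3 ^ f := Nat.pow_le_pow_right (by norm_num) hef
  have hd : (m * 3 ^ e + j * 3 ^ f) / 3 ^ f = j := by
    rw [Nat.add_mul_div_right _ _ (Nat.pos_of_ne_zero (pow_ne_zero f (show (3:ℕ) ≠ 0 by norm_num))),
      Nat.div_eq_of_lt h1, Nat.zero_add]
  have hmm : (m * 3 ^ e + j * 3 ^ f) % 3 ^ f = m * 3 ^ e := by
    rw [Nat.add_mul_mod_self_right, Nat.mod_eq_of_lt h1]
  have hz : (m * 3 ^ e + j * 3 ^ f) % 3 ^ e = 0 := by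
    have : (3:ℕ) ^ e ∣ m * 3 ^ e + j * 3 ^ f :=
      dvd_add (dvd_mul_left _ _) (dvd_mul_of_dvd_right (pow_dvd_pow 3 hef.le) j)
    omega
  rw [master u v e f _ hu hef, hd, hmm, hz, if_pos rfl,
    Nat.mul_div_cancel _ (Nat.pos_of_ne_zero (pow_ne_zero e (show (3:ℕ) ≠ 0 by norm_num)))]
  ring

lemma master_support (u v e f i : ℕ) (hu : u ≤ 2) (hef : e < f)
    (h : ((u * 3 ^ e + v * 3 ^ f).choose i : ZMod 3) ≠ 0) :
    ∃ m ≤ u, ∃ j ≤ v, i = m * 3 ^ e + j * 3 ^ f := by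
  rw [master u v e f i hu hef] at h
  have h1 : (v.choose (i / 3 ^ f) : ZMod 3) ≠ 0 := by
    intro hh; rw [hh] at h; simp at h
  have h2 : (u.choose (i % 3 ^ f / 3 ^ e) : ZMod 3) ≠ 0 := by
    intro hh; rw [hh] at h; simp at h
  have h3 : i % 3 ^ e = 0 := by
    by_contra hh; rw [if_neg hh] at h; simp at h
  refine ⟨i % 3 ^ f / 3 ^ e, ?_, i / 3 ^ f, ?_, ?_⟩
  · by_contra hh
    exact h2 (by rw [Nat.choose_eq_zero_of_lt (by omega)]; simp)
  · by_contra hh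
    exact h1 (by rw [Nat.choose_eq_zero_of_lt (by omega)]; simp)
  · have d1 := Nat.mod_add_div i (3 ^ f)
    have d2 := Nat.mod_add_div (i % 3 ^ f) (3 ^ e)
    have d3 : i % 3 ^ f % 3 ^ e = 0 := by
      rw [Nat.mod_mod_of_dvd _ (pow_dvd_pow 3 hef.le)]; exact h3
    rw [Nat.mul_comm (i % 3 ^ f / 3 ^ e), Nat.mul_comm (i / 3 ^ f)]
    omega

lemma master_zero_mod (u v e f i : ℕ) (hu : u ≤ 2) (hef : e < f) (h : i % 3 ^ e ≠ 0) :
    (((u * 3 ^ e + v * 3 ^ f).choose i : ZMod 3)) = 0 := by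
  rw [master u v e f i hu hef, if_neg h, mul_zero]

lemma hd_pow (i n : ℕ) : hasseDeriv i (X ^ n : Polynomial F) = C ((n.choose i : F)) * X ^ (n - i) := by
  rw [X_pow_eq_monomial, hasseDeriv_monomial, mul_one, C_mul_X_pow_eq_monomial]

lemma three_eq_zero : (3 : Polynomial F) = 0 := by
  rw [← map_ofNat (C : F →+* Polynomial F) 3, show (3 : F) = 0 by decide, map_zero]

lemma choose_cast_zero {n i : ℕ} (h : n < i) : ((n.choose i : ℕ) : F) = 0 := by
  rw [Nat.choose_eq_zero_of_lt h]; exact Nat.cast_zero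

lemma add_mod_ne_zero {i k n : ℕ} (h1 : 0 < i) (h2 : i < n) : (i + k * n) % n ≠ 0 := by
  rw [Nat.add_mul_mod_self_right, Nat.mod_eq_of_lt h2]; omega

lemma mod_ne_zero' {i r k n : ℕ} (h : i = r + k * n) (h1 : 0 < r) (h2 : r < n) : i % n ≠ 0 := by
  subst h; exact add_mod_ne_zero h1 h2

lemma sub_helper {x i r : ℕ} (h : x = r + i) : x - i = r := by omega

lemma hd_pZ (s i : ℕ) : hasseDeriv i (pZ s) =
    C (((1*3^0+2*3^s : ℕ).choose i : F)) * X ^ (1*3^0+2*3^s - i)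
    - C (((2*3^s+1*3^(2*s+1) : ℕ).choose i : F)) * X ^ (2*3^s+1*3^(2*s+1) - i)
    + C (((1*3^(2*s+1)+2*3^(3*s+1) : ℕ).choose i : F)) * X ^ (1*3^(2*s+1)+2*3^(3*s+1) - i)
    - C (((2*3^(3*s+1)+1*3^(4*s+2) : ℕ).choose i : F)) * X ^ (2*3^(3*s+1)+1*3^(4*s+2) - i) := by
  have e1 : 2*q0 s+1 = 1*3^0+2*3^s := by unfold q0; ring
  have e2 : q s+2*q0 s = 2*3^s+1*3^(2*s+1) := by unfold q0 q; ring
  have e3 : q s*(2*q0 s+1) = 1*3^(2*s+1)+2*3^(3*s+1) := by unfold q0 q; ring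
  have e4 : q s*(q s+2*q0 s) = 2*3^(3*s+1)+1*3^(4*s+2) := by unfold q0 q; ring
  simp only [pZ, map_sub, map_add, hd_pow]
  rw [e3, e4, e1, e2]

theorem stmt19 (s : ℕ) (hs : 1 ≤ s) :
    hasseDeriv 1 (pZ s) = X ^ (2 * q0 s) ∧
    hasseDeriv (q0 s) (pZ s) = X ^ (q s + q0 s) - X ^ (q0 s + 1) ∧
    hasseDeriv (q0 s + 1) (pZ s) = -X ^ q0 s ∧
    hasseDeriv (2 * q0 s) (pZ s) = X - X ^ q s ∧
    hasseDeriv (2 * q0 s + 1) (pZ s) = 1 ∧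
    hasseDeriv (q s) (pZ s) = X ^ (2 * (q s * q0 s)) - X ^ (2 * q0 s) ∧
    hasseDeriv (q s + q0 s) (pZ s) = X ^ q0 s ∧
    hasseDeriv (q s + 2 * q0 s) (pZ s) = -1 ∧
    hasseDeriv (q s * q0 s) (pZ s) = X ^ (q s ^ 2 + q s * q0 s) - X ^ (q s * q0 s + q s) ∧
    hasseDeriv (q s * q0 s + q s) (pZ s) = -X ^ (q s * q0 s) ∧
    hasseDeriv (2 * (q s * q0 s)) (pZ s) = X ^ q s - X ^ (q s ^ 2) ∧
    hasseDeriv (2 * (q s * q0 s) + q s) (pZ s) = 1 ∧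
    ∀ i : ℕ, 1 ≤ i → i ≤ q s ^ 2 - 1 →
      i ∉ ({1, q0 s, q0 s + 1, 2 * q0 s, 2 * q0 s + 1, q s, q s + q0 s, q s + 2 * q0 s,
            q s * q0 s, q s * q0 s + q s, 2 * (q s * q0 s), 2 * (q s * q0 s) + q s} : Set ℕ) →
      hasseDeriv i (pZ s) = 0 := by
  have hs3 : (3:ℕ) ≤ 3^s := by
    calc (3:ℕ) = 3^1 := by norm_num
    _ ≤ 3^s := Nat.pow_le_pow_right (by norm_num) hs
  have h30 : (3:ℕ)^0 = 1 := pow_zero 3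
  have hT3 : (3:ℕ)^s < 3^(2*s+1) := Nat.pow_lt_pow_right (by norm_num) (by omega)
  have hTU : (3:ℕ)^(2*s+1) < 3^(3*s+1) := Nat.pow_lt_pow_right (by norm_num) (by omega)
  have hUQ : (3:ℕ)^(3*s+1) < 3^(4*s+2) := Nat.pow_lt_pow_right (by norm_num) (by omega)
  have hAT : 2*3^s+1 < (3:ℕ)^(2*s+1) := by
    have h1 : (3:ℕ)^(s+2) ≤ 3^(2*s+1) := Nat.pow_le_pow_right (by norm_num) (by omega)
    have h2 : (3:ℕ)^(s+2) = 9*3^s := by ring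
    omega
  have hBU : (3:ℕ)^(2*s+1)+2*3^s < 3^(3*s+1) := by
    have h1 : (3:ℕ)^(2*s+2) ≤ 3^(3*s+1) := Nat.pow_le_pow_right (by norm_num) (by omega)
    have h2 : (3:ℕ)^(2*s+2) = 3*3^(2*s+1) := by ring
    omega
  have hQeq : q s^2 = 3^(4*s+2) := by unfold q; ring
  have hUeq : q s*q0 s = 3^(3*s+1) := by unfold q q0; ring
  have hp1 : (1:ℕ) ≤ 3^s := Nat.one_le_pow _ _ (by norm_num)
  have hp2 : (1:ℕ) ≤ 3^(2*s) := Nat.one_le_pow _ _ (by norm_num)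
  have hp3 : (1:ℕ) ≤ 3^(3*s) := Nat.one_le_pow _ _ (by norm_num)
  have hp4 : (1:ℕ) ≤ 3^(4*s) := Nat.one_le_pow _ _ (by norm_num)
  have hm12 : (3:ℕ)^s ≤ 3^(2*s) := Nat.pow_le_pow_right (by norm_num) (by omega)
  have hm23 : (3:ℕ)^(2*s) ≤ 3^(3*s) := Nat.pow_le_pow_right (by norm_num) (by omega)
  have hm34 : (3:ℕ)^(3*s) ≤ 3^(4*s) := Nat.pow_le_pow_right (by norm_num) (by omega)
  have hqeq : q s = 3^(2*s+1) := rfl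
  have hq0eq : q0 s = 3^s := rfl
  refine ⟨?_, ?_, ?_, ?_, ?_, ?_, ?_, ?_, ?_, ?_, ?_, ?_, ?_⟩
  · -- i = 1
    have cA : (((1*3^0+2*3^s:ℕ)).choose (1) : F) = 1 := by
      have h := master_val 1 2 (0) (s) 1 0 (by norm_num) (by norm_num) (by omega)
      rw [show (1*3^0+0*3^s : ℕ) = 1 from by first | ring1 | (unfold q0 q; ring1) | (unfold q0; ring1) | (unfold q; ring1)] at h
      rw [h]; decide
    have cB : (((2*3^s+1*3^(2*s+1):ℕ)).choose (1) : F) = 0 := by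
      apply master_zero_mod 2 1 (s) (2*s+1) (1) (by norm_num) (by omega)
      exact mod_ne_zero' (show (1 : ℕ) = (1) + (0)*3^s from by first | ring1 | (unfold q0 q; ring1) | (unfold q0; ring1) | (unfold q; ring1)) (by omega) (by omega)
    have cC : (((1*3^(2*s+1)+2*3^(3*s+1):ℕ)).choose (1) : F) = 0 := by
      apply master_zero_mod 1 2 (2*s+1) (3*s+1) (1) (by norm_num) (by omega)
      exact mod_ne_zero' (show (1 : ℕ) = (1) + (0)*3^(2*s+1) from by first | ring1 | (unfold q0 q; ring1) | (unfold q0; ring1) | (unfold q; ring1)) (by omega) (by omega)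
    have cD : (((2*3^(3*s+1)+1*3^(4*s+2):ℕ)).choose (1) : F) = 0 := by
      apply master_zero_mod 2 1 (3*s+1) (4*s+2) (1) (by norm_num) (by omega)
      exact mod_ne_zero' (show (1 : ℕ) = (1) + (0)*3^(3*s+1) from by first | ring1 | (unfold q0 q; ring1) | (unfold q0; ring1) | (unfold q; ring1)) (by omega) (by omega)
    have eA : (1*3^0+2*3^s : ℕ) - (1) = 2*q0 s := sub_helper (by first | ring1 | (unfold q0 q; ring1) | (unfold q0; ring1) | (unfold q; ring1))
    rw [hd_pZ s (1), cA, cB, cC, cD, eA]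
    simp only [map_zero, zero_mul, map_one, map_ofNat]
    ring
  · -- i = q0 s
    have cA : (((1*3^0+2*3^s:ℕ)).choose (q0 s) : F) = 2 := by
      have h := master_val 1 2 (0) (s) 0 1 (by norm_num) (by norm_num) (by omega)
      rw [show (0*3^0+1*3^s : ℕ) = q0 s from by first | ring1 | (unfold q0 q; ring1) | (unfold q0; ring1) | (unfold q; ring1)] at h
      rw [h]; decide
    have cB : (((2*3^s+1*3^(2*s+1):ℕ)).choose (q0 s) : F) = 2 := by
      have h := master_val 2 1 (s) (2*s+1) 1 0 (by norm_num) (by norm_num) (by omega)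
      rw [show (1*3^s+0*3^(2*s+1) : ℕ) = q0 s from by first | ring1 | (unfold q0 q; ring1) | (unfold q0; ring1) | (unfold q; ring1)] at h
      rw [h]; decide
    have cC : (((1*3^(2*s+1)+2*3^(3*s+1):ℕ)).choose (q0 s) : F) = 0 := by
      apply master_zero_mod 1 2 (2*s+1) (3*s+1) (q0 s) (by norm_num) (by omega)
      exact mod_ne_zero' (show (q0 s : ℕ) = (3^s) + (0)*3^(2*s+1) from by first | ring1 | (unfold q0 q; ring1) | (unfold q0; ring1) | (unfold q; ring1)) (by omega) (by omega)
    have cD : (((2*3^(3*s+1)+1*3^(4*s+2):ℕ)).choose (q0 s) : F) = 0 := by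
      apply master_zero_mod 2 1 (3*s+1) (4*s+2) (q0 s) (by norm_num) (by omega)
      exact mod_ne_zero' (show (q0 s : ℕ) = (3^s) + (0)*3^(3*s+1) from by first | ring1 | (unfold q0 q; ring1) | (unfold q0; ring1) | (unfold q; ring1)) (by omega) (by omega)
    have eA : (1*3^0+2*3^s : ℕ) - (q0 s) = q0 s+1 := sub_helper (by first | ring1 | (unfold q0 q; ring1) | (unfold q0; ring1) | (unfold q; ring1))
    have eB : (2*3^s+1*3^(2*s+1) : ℕ) - (q0 s) = q s+q0 s := sub_helper (by first | ring1 | (unfold q0 q; ring1) | (unfold q0; ring1) | (unfold q; ring1))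
    rw [hd_pZ s (q0 s), cA, cB, cC, cD, eA, eB]
    simp only [map_zero, zero_mul, map_one, map_ofNat]
    linear_combination (X^(q0 s+1) - X^(q s+q0 s) : Polynomial F) * three_eq_zero
  · -- i = q0 s+1
    have cA : (((1*3^0+2*3^s:ℕ)).choose (q0 s+1) : F) = 2 := by
      have h := master_val 1 2 (0) (s) 1 1 (by norm_num) (by norm_num) (by omega)
      rw [show (1*3^0+1*3^s : ℕ) = q0 s+1 from by first | ring1 | (unfold q0 q; ring1) | (unfold q0; ring1) | (unfold q; ring1)] at h
      rw [h]; decide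
    have cB : (((2*3^s+1*3^(2*s+1):ℕ)).choose (q0 s+1) : F) = 0 := by
      apply master_zero_mod 2 1 (s) (2*s+1) (q0 s+1) (by norm_num) (by omega)
      exact mod_ne_zero' (show (q0 s+1 : ℕ) = (1) + (1)*3^s from by first | ring1 | (unfold q0 q; ring1) | (unfold q0; ring1) | (unfold q; ring1)) (by omega) (by omega)
    have cC : (((1*3^(2*s+1)+2*3^(3*s+1):ℕ)).choose (q0 s+1) : F) = 0 := by
      apply master_zero_mod 1 2 (2*s+1) (3*s+1) (q0 s+1) (by norm_num) (by omega)
      exact mod_ne_zero' (show (q0 s+1 : ℕ) = (3^s+1) + (0)*3^(2*s+1) from by first | ring1 | (unfold q0 q; ring1) | (unfold q0; ring1) | (unfold q; ring1)) (by omega) (by omega)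
    have cD : (((2*3^(3*s+1)+1*3^(4*s+2):ℕ)).choose (q0 s+1) : F) = 0 := by
      apply master_zero_mod 2 1 (3*s+1) (4*s+2) (q0 s+1) (by norm_num) (by omega)
      exact mod_ne_zero' (show (q0 s+1 : ℕ) = (3^s+1) + (0)*3^(3*s+1) from by first | ring1 | (unfold q0 q; ring1) | (unfold q0; ring1) | (unfold q; ring1)) (by omega) (by omega)
    have eA : (1*3^0+2*3^s : ℕ) - (q0 s+1) = q0 s := sub_helper (by first | ring1 | (unfold q0 q; ring1) | (unfold q0; ring1) | (unfold q; ring1))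
    rw [hd_pZ s (q0 s+1), cA, cB, cC, cD, eA]
    simp only [map_zero, zero_mul, map_one, map_ofNat]
    linear_combination (X^(q0 s) : Polynomial F) * three_eq_zero
  · -- i = 2*q0 s
    have cA : (((1*3^0+2*3^s:ℕ)).choose (2*q0 s) : F) = 1 := by
      have h := master_val 1 2 (0) (s) 0 2 (by norm_num) (by norm_num) (by omega)
      rw [show (0*3^0+2*3^s : ℕ) = 2*q0 s from by first | ring1 | (unfold q0 q; ring1) | (unfold q0; ring1) | (unfold q; ring1)] at h
      rw [h]; decide
    have cB : (((2*3^s+1*3^(2*s+1):ℕ)).choose (2*q0 s) : F) = 1 := by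
      have h := master_val 2 1 (s) (2*s+1) 2 0 (by norm_num) (by norm_num) (by omega)
      rw [show (2*3^s+0*3^(2*s+1) : ℕ) = 2*q0 s from by first | ring1 | (unfold q0 q; ring1) | (unfold q0; ring1) | (unfold q; ring1)] at h
      rw [h]; decide
    have cC : (((1*3^(2*s+1)+2*3^(3*s+1):ℕ)).choose (2*q0 s) : F) = 0 := by
      apply master_zero_mod 1 2 (2*s+1) (3*s+1) (2*q0 s) (by norm_num) (by omega)
      exact mod_ne_zero' (show (2*q0 s : ℕ) = (2*3^s) + (0)*3^(2*s+1) from by first | ring1 | (unfold q0 q; ring1) | (unfold q0; ring1) | (unfold q; ring1)) (by omega) (by omega)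
    have cD : (((2*3^(3*s+1)+1*3^(4*s+2):ℕ)).choose (2*q0 s) : F) = 0 := by
      apply master_zero_mod 2 1 (3*s+1) (4*s+2) (2*q0 s) (by norm_num) (by omega)
      exact mod_ne_zero' (show (2*q0 s : ℕ) = (2*3^s) + (0)*3^(3*s+1) from by first | ring1 | (unfold q0 q; ring1) | (unfold q0; ring1) | (unfold q; ring1)) (by omega) (by omega)
    have eA : (1*3^0+2*3^s : ℕ) - (2*q0 s) = 1 := sub_helper (by first | ring1 | (unfold q0 q; ring1) | (unfold q0; ring1) | (unfold q; ring1))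
    have eB : (2*3^s+1*3^(2*s+1) : ℕ) - (2*q0 s) = q s := sub_helper (by first | ring1 | (unfold q0 q; ring1) | (unfold q0; ring1) | (unfold q; ring1))
    rw [hd_pZ s (2*q0 s), cA, cB, cC, cD, eA, eB]
    simp only [map_zero, zero_mul, map_one, map_ofNat]
    ring
  · -- i = 2*q0 s+1
    have cA : (((1*3^0+2*3^s:ℕ)).choose (2*q0 s+1) : F) = 1 := by
      have h := master_val 1 2 (0) (s) 1 2 (by norm_num) (by norm_num) (by omega)
      nth_rewrite 2 [show (1*3^0+2*3^s : ℕ) = 2*q0 s+1 from by first | ring1 | (unfold q0 q; ring1) | (unfold q0; ring1) | (unfold q; ring1)] at h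
      rw [h]; decide
    have cB : (((2*3^s+1*3^(2*s+1):ℕ)).choose (2*q0 s+1) : F) = 0 := by
      apply master_zero_mod 2 1 (s) (2*s+1) (2*q0 s+1) (by norm_num) (by omega)
      exact mod_ne_zero' (show (2*q0 s+1 : ℕ) = (1) + (2)*3^s from by first | ring1 | (unfold q0 q; ring1) | (unfold q0; ring1) | (unfold q; ring1)) (by omega) (by omega)
    have cC : (((1*3^(2*s+1)+2*3^(3*s+1):ℕ)).choose (2*q0 s+1) : F) = 0 := by
      apply master_zero_mod 1 2 (2*s+1) (3*s+1) (2*q0 s+1) (by norm_num) (by omega)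
      exact mod_ne_zero' (show (2*q0 s+1 : ℕ) = (2*3^s+1) + (0)*3^(2*s+1) from by first | ring1 | (unfold q0 q; ring1) | (unfold q0; ring1) | (unfold q; ring1)) (by omega) (by omega)
    have cD : (((2*3^(3*s+1)+1*3^(4*s+2):ℕ)).choose (2*q0 s+1) : F) = 0 := by
      apply master_zero_mod 2 1 (3*s+1) (4*s+2) (2*q0 s+1) (by norm_num) (by omega)
      exact mod_ne_zero' (show (2*q0 s+1 : ℕ) = (2*3^s+1) + (0)*3^(3*s+1) from by first | ring1 | (unfold q0 q; ring1) | (unfold q0; ring1) | (unfold q; ring1)) (by omega) (by omega)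
    have eA : (1*3^0+2*3^s : ℕ) - (2*q0 s+1) = 0 := sub_helper (by first | ring1 | (unfold q0 q; ring1) | (unfold q0; ring1) | (unfold q; ring1))
    rw [hd_pZ s (2*q0 s+1), cA, cB, cC, cD, eA]
    simp only [map_zero, zero_mul, map_one, map_ofNat]
    ring
  · -- i = q s
    have cA : (((1*3^0+2*3^s:ℕ)).choose (q s) : F) = 0 := choose_cast_zero (by omega)
    have cB : (((2*3^s+1*3^(2*s+1):ℕ)).choose (q s) : F) = 1 := by
      have h := master_val 2 1 (s) (2*s+1) 0 1 (by norm_num) (by norm_num) (by omega)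
      rw [show (0*3^s+1*3^(2*s+1) : ℕ) = q s from by first | ring1 | (unfold q0 q; ring1) | (unfold q0; ring1) | (unfold q; ring1)] at h
      rw [h]; decide
    have cC : (((1*3^(2*s+1)+2*3^(3*s+1):ℕ)).choose (q s) : F) = 1 := by
      have h := master_val 1 2 (2*s+1) (3*s+1) 1 0 (by norm_num) (by norm_num) (by omega)
      rw [show (1*3^(2*s+1)+0*3^(3*s+1) : ℕ) = q s from by first | ring1 | (unfold q0 q; ring1) | (unfold q0; ring1) | (unfold q; ring1)] at h
      rw [h]; decide
    have cD : (((2*3^(3*s+1)+1*3^(4*s+2):ℕ)).choose (q s) : F) = 0 := by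
      apply master_zero_mod 2 1 (3*s+1) (4*s+2) (q s) (by norm_num) (by omega)
      exact mod_ne_zero' (show (q s : ℕ) = (3^(2*s+1)) + (0)*3^(3*s+1) from by first | ring1 | (unfold q0 q; ring1) | (unfold q0; ring1) | (unfold q; ring1)) (by omega) (by omega)
    have eB : (2*3^s+1*3^(2*s+1) : ℕ) - (q s) = 2*q0 s := sub_helper (by first | ring1 | (unfold q0 q; ring1) | (unfold q0; ring1) | (unfold q; ring1))
    have eC : (1*3^(2*s+1)+2*3^(3*s+1) : ℕ) - (q s) = 2*(q s*q0 s) := sub_helper (by first | ring1 | (unfold q0 q; ring1) | (unfold q0; ring1) | (unfold q; ring1))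
    rw [hd_pZ s (q s), cA, cB, cC, cD, eB, eC]
    simp only [map_zero, zero_mul, map_one, map_ofNat]
    ring
  · -- i = q s+q0 s
    have cA : (((1*3^0+2*3^s:ℕ)).choose (q s+q0 s) : F) = 0 := choose_cast_zero (by omega)
    have cB : (((2*3^s+1*3^(2*s+1):ℕ)).choose (q s+q0 s) : F) = 2 := by
      have h := master_val 2 1 (s) (2*s+1) 1 1 (by norm_num) (by norm_num) (by omega)
      rw [show (1*3^s+1*3^(2*s+1) : ℕ) = q s+q0 s from by first | ring1 | (unfold q0 q; ring1) | (unfold q0; ring1) | (unfold q; ring1)] at h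
      rw [h]; decide
    have cC : (((1*3^(2*s+1)+2*3^(3*s+1):ℕ)).choose (q s+q0 s) : F) = 0 := by
      apply master_zero_mod 1 2 (2*s+1) (3*s+1) (q s+q0 s) (by norm_num) (by omega)
      exact mod_ne_zero' (show (q s+q0 s : ℕ) = (3^s) + (1)*3^(2*s+1) from by first | ring1 | (unfold q0 q; ring1) | (unfold q0; ring1) | (unfold q; ring1)) (by omega) (by omega)
    have cD : (((2*3^(3*s+1)+1*3^(4*s+2):ℕ)).choose (q s+q0 s) : F) = 0 := by
      apply master_zero_mod 2 1 (3*s+1) (4*s+2) (q s+q0 s) (by norm_num) (by omega)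
      exact mod_ne_zero' (show (q s+q0 s : ℕ) = (3^(2*s+1)+3^s) + (0)*3^(3*s+1) from by first | ring1 | (unfold q0 q; ring1) | (unfold q0; ring1) | (unfold q; ring1)) (by omega) (by omega)
    have eB : (2*3^s+1*3^(2*s+1) : ℕ) - (q s+q0 s) = q0 s := sub_helper (by first | ring1 | (unfold q0 q; ring1) | (unfold q0; ring1) | (unfold q; ring1))
    rw [hd_pZ s (q s+q0 s), cA, cB, cC, cD, eB]
    simp only [map_zero, zero_mul, map_one, map_ofNat]
    linear_combination (-X^(q0 s) : Polynomial F) * three_eq_zero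
  · -- i = q s+2*q0 s
    have cA : (((1*3^0+2*3^s:ℕ)).choose (q s+2*q0 s) : F) = 0 := choose_cast_zero (by omega)
    have cB : (((2*3^s+1*3^(2*s+1):ℕ)).choose (q s+2*q0 s) : F) = 1 := by
      have h := master_val 2 1 (s) (2*s+1) 2 1 (by norm_num) (by norm_num) (by omega)
      nth_rewrite 2 [show (2*3^s+1*3^(2*s+1) : ℕ) = q s+2*q0 s from by first | ring1 | (unfold q0 q; ring1) | (unfold q0; ring1) | (unfold q; ring1)] at h
      rw [h]; decide
    have cC : (((1*3^(2*s+1)+2*3^(3*s+1):ℕ)).choose (q s+2*q0 s) : F) = 0 := by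
      apply master_zero_mod 1 2 (2*s+1) (3*s+1) (q s+2*q0 s) (by norm_num) (by omega)
      exact mod_ne_zero' (show (q s+2*q0 s : ℕ) = (2*3^s) + (1)*3^(2*s+1) from by first | ring1 | (unfold q0 q; ring1) | (unfold q0; ring1) | (unfold q; ring1)) (by omega) (by omega)
    have cD : (((2*3^(3*s+1)+1*3^(4*s+2):ℕ)).choose (q s+2*q0 s) : F) = 0 := by
      apply master_zero_mod 2 1 (3*s+1) (4*s+2) (q s+2*q0 s) (by norm_num) (by omega)
      exact mod_ne_zero' (show (q s+2*q0 s : ℕ) = (3^(2*s+1)+2*3^s) + (0)*3^(3*s+1) from by first | ring1 | (unfold q0 q; ring1) | (unfold q0; ring1) | (unfold q; ring1)) (by omega) (by omega)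
    have eB : (2*3^s+1*3^(2*s+1) : ℕ) - (q s+2*q0 s) = 0 := sub_helper (by first | ring1 | (unfold q0 q; ring1) | (unfold q0; ring1) | (unfold q; ring1))
    rw [hd_pZ s (q s+2*q0 s), cA, cB, cC, cD, eB]
    simp only [map_zero, zero_mul, map_one, map_ofNat]
    ring
  · -- i = q s*q0 s
    have cA : (((1*3^0+2*3^s:ℕ)).choose (q s*q0 s) : F) = 0 := choose_cast_zero (by omega)
    have cB : (((2*3^s+1*3^(2*s+1):ℕ)).choose (q s*q0 s) : F) = 0 := choose_cast_zero (by omega)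
    have cC : (((1*3^(2*s+1)+2*3^(3*s+1):ℕ)).choose (q s*q0 s) : F) = 2 := by
      have h := master_val 1 2 (2*s+1) (3*s+1) 0 1 (by norm_num) (by norm_num) (by omega)
      rw [show (0*3^(2*s+1)+1*3^(3*s+1) : ℕ) = q s*q0 s from by first | ring1 | (unfold q0 q; ring1) | (unfold q0; ring1) | (unfold q; ring1)] at h
      rw [h]; decide
    have cD : (((2*3^(3*s+1)+1*3^(4*s+2):ℕ)).choose (q s*q0 s) : F) = 2 := by
      have h := master_val 2 1 (3*s+1) (4*s+2) 1 0 (by norm_num) (by norm_num) (by omega)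
      rw [show (1*3^(3*s+1)+0*3^(4*s+2) : ℕ) = q s*q0 s from by first | ring1 | (unfold q0 q; ring1) | (unfold q0; ring1) | (unfold q; ring1)] at h
      rw [h]; decide
    have eC : (1*3^(2*s+1)+2*3^(3*s+1) : ℕ) - (q s*q0 s) = q s*q0 s+q s := sub_helper (by first | ring1 | (unfold q0 q; ring1) | (unfold q0; ring1) | (unfold q; ring1))
    have eD : (2*3^(3*s+1)+1*3^(4*s+2) : ℕ) - (q s*q0 s) = q s^2+q s*q0 s := sub_helper (by first | ring1 | (unfold q0 q; ring1) | (unfold q0; ring1) | (unfold q; ring1))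
    rw [hd_pZ s (q s*q0 s), cA, cB, cC, cD, eC, eD]
    simp only [map_zero, zero_mul, map_one, map_ofNat]
    linear_combination (X^(q s*q0 s+q s) - X^(q s^2+q s*q0 s) : Polynomial F) * three_eq_zero
  · -- i = q s*q0 s+q s
    have cA : (((1*3^0+2*3^s:ℕ)).choose (q s*q0 s+q s) : F) = 0 := choose_cast_zero (by omega)
    have cB : (((2*3^s+1*3^(2*s+1):ℕ)).choose (q s*q0 s+q s) : F) = 0 := choose_cast_zero (by omega)
    have cC : (((1*3^(2*s+1)+2*3^(3*s+1):ℕ)).choose (q s*q0 s+q s) : F) = 2 := by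
      have h := master_val 1 2 (2*s+1) (3*s+1) 1 1 (by norm_num) (by norm_num) (by omega)
      rw [show (1*3^(2*s+1)+1*3^(3*s+1) : ℕ) = q s*q0 s+q s from by first | ring1 | (unfold q0 q; ring1) | (unfold q0; ring1) | (unfold q; ring1)] at h
      rw [h]; decide
    have cD : (((2*3^(3*s+1)+1*3^(4*s+2):ℕ)).choose (q s*q0 s+q s) : F) = 0 := by
      apply master_zero_mod 2 1 (3*s+1) (4*s+2) (q s*q0 s+q s) (by norm_num) (by omega)
      exact mod_ne_zero' (show (q s*q0 s+q s : ℕ) = (3^(2*s+1)) + (1)*3^(3*s+1) from by first | ring1 | (unfold q0 q; ring1) | (unfold q0; ring1) | (unfold q; ring1)) (by omega) (by omega)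
    have eC : (1*3^(2*s+1)+2*3^(3*s+1) : ℕ) - (q s*q0 s+q s) = q s*q0 s := sub_helper (by first | ring1 | (unfold q0 q; ring1) | (unfold q0; ring1) | (unfold q; ring1))
    rw [hd_pZ s (q s*q0 s+q s), cA, cB, cC, cD, eC]
    simp only [map_zero, zero_mul, map_one, map_ofNat]
    linear_combination (X^(q s*q0 s) : Polynomial F) * three_eq_zero
  · -- i = 2*(q s*q0 s)
    have cA : (((1*3^0+2*3^s:ℕ)).choose (2*(q s*q0 s)) : F) = 0 := choose_cast_zero (by omega)
    have cB : (((2*3^s+1*3^(2*s+1):ℕ)).choose (2*(q s*q0 s)) : F) = 0 := choose_cast_zero (by omega)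
    have cC : (((1*3^(2*s+1)+2*3^(3*s+1):ℕ)).choose (2*(q s*q0 s)) : F) = 1 := by
      have h := master_val 1 2 (2*s+1) (3*s+1) 0 2 (by norm_num) (by norm_num) (by omega)
      rw [show (0*3^(2*s+1)+2*3^(3*s+1) : ℕ) = 2*(q s*q0 s) from by first | ring1 | (unfold q0 q; ring1) | (unfold q0; ring1) | (unfold q; ring1)] at h
      rw [h]; decide
    have cD : (((2*3^(3*s+1)+1*3^(4*s+2):ℕ)).choose (2*(q s*q0 s)) : F) = 1 := by
      have h := master_val 2 1 (3*s+1) (4*s+2) 2 0 (by norm_num) (by norm_num) (by omega)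
      rw [show (2*3^(3*s+1)+0*3^(4*s+2) : ℕ) = 2*(q s*q0 s) from by first | ring1 | (unfold q0 q; ring1) | (unfold q0; ring1) | (unfold q; ring1)] at h
      rw [h]; decide
    have eC : (1*3^(2*s+1)+2*3^(3*s+1) : ℕ) - (2*(q s*q0 s)) = q s := sub_helper (by first | ring1 | (unfold q0 q; ring1) | (unfold q0; ring1) | (unfold q; ring1))
    have eD : (2*3^(3*s+1)+1*3^(4*s+2) : ℕ) - (2*(q s*q0 s)) = q s^2 := sub_helper (by first | ring1 | (unfold q0 q; ring1) | (unfold q0; ring1) | (unfold q; ring1))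
    rw [hd_pZ s (2*(q s*q0 s)), cA, cB, cC, cD, eC, eD]
    simp only [map_zero, zero_mul, map_one, map_ofNat]
    ring
  · -- i = 2*(q s*q0 s)+q s
    have cA : (((1*3^0+2*3^s:ℕ)).choose (2*(q s*q0 s)+q s) : F) = 0 := choose_cast_zero (by omega)
    have cB : (((2*3^s+1*3^(2*s+1):ℕ)).choose (2*(q s*q0 s)+q s) : F) = 0 := choose_cast_zero (by omega)
    have cC : (((1*3^(2*s+1)+2*3^(3*s+1):ℕ)).choose (2*(q s*q0 s)+q s) : F) = 1 := by
      have h := master_val 1 2 (2*s+1) (3*s+1) 1 2 (by norm_num) (by norm_num) (by omega)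
      nth_rewrite 2 [show (1*3^(2*s+1)+2*3^(3*s+1) : ℕ) = 2*(q s*q0 s)+q s from by first | ring1 | (unfold q0 q; ring1) | (unfold q0; ring1) | (unfold q; ring1)] at h
      rw [h]; decide
    have cD : (((2*3^(3*s+1)+1*3^(4*s+2):ℕ)).choose (2*(q s*q0 s)+q s) : F) = 0 := by
      apply master_zero_mod 2 1 (3*s+1) (4*s+2) (2*(q s*q0 s)+q s) (by norm_num) (by omega)
      exact mod_ne_zero' (show (2*(q s*q0 s)+q s : ℕ) = (3^(2*s+1)) + (2)*3^(3*s+1) from by first | ring1 | (unfold q0 q; ring1) | (unfold q0; ring1) | (unfold q; ring1)) (by omega) (by omega)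
    have eC : (1*3^(2*s+1)+2*3^(3*s+1) : ℕ) - (2*(q s*q0 s)+q s) = 0 := sub_helper (by first | ring1 | (unfold q0 q; ring1) | (unfold q0; ring1) | (unfold q; ring1))
    rw [hd_pZ s (2*(q s*q0 s)+q s), cA, cB, cC, cD, eC]
    simp only [map_zero, zero_mul, map_one, map_ofNat]
    ring
  · -- vanishing
    intro i hi1 hi2 hmem
    have cA : (((1*3^0+2*3^s:ℕ)).choose i : F) = 0 := by
      by_contra h
      obtain ⟨m, hm, j, hj, rfl⟩ := master_support 1 2 (0) (s) i (by norm_num) (by omega) h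
      interval_cases m <;> interval_cases j
      · simp at hi1
      · exact hmem (by simp only [Set.mem_insert_iff, Set.mem_singleton_iff]; exact Or.inr (Or.inl (by first | ring1 | (unfold q0 q; ring1) | (unfold q0; ring1) | (unfold q; ring1))))
      · exact hmem (by simp only [Set.mem_insert_iff, Set.mem_singleton_iff]; exact Or.inr (Or.inr (Or.inr (Or.inl (by first | ring1 | (unfold q0 q; ring1) | (unfold q0; ring1) | (unfold q; ring1))))))
      · exact hmem (by simp only [Set.mem_insert_iff, Set.mem_singleton_iff]; exact Or.inl (by first | ring1 | (unfold q0 q; ring1) | (unfold q0; ring1) | (unfold q; ring1)))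
      · exact hmem (by simp only [Set.mem_insert_iff, Set.mem_singleton_iff]; exact Or.inr (Or.inr (Or.inl (by first | ring1 | (unfold q0 q; ring1) | (unfold q0; ring1) | (unfold q; ring1)))))
      · exact hmem (by simp only [Set.mem_insert_iff, Set.mem_singleton_iff]; exact Or.inr (Or.inr (Or.inr (Or.inr (Or.inl (by first | ring1 | (unfold q0 q; ring1) | (unfold q0; ring1) | (unfold q; ring1)))))))
    have cB : (((2*3^s+1*3^(2*s+1):ℕ)).choose i : F) = 0 := by
      by_contra h
      obtain ⟨m, hm, j, hj, rfl⟩ := master_support 2 1 (s) (2*s+1) i (by norm_num) (by omega) h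
      interval_cases m <;> interval_cases j
      · simp at hi1
      · exact hmem (by simp only [Set.mem_insert_iff, Set.mem_singleton_iff]; exact Or.inr (Or.inr (Or.inr (Or.inr (Or.inr (Or.inl (by first | ring1 | (unfold q0 q; ring1) | (unfold q0; ring1) | (unfold q; ring1))))))))
      · exact hmem (by simp only [Set.mem_insert_iff, Set.mem_singleton_iff]; exact Or.inr (Or.inl (by first | ring1 | (unfold q0 q; ring1) | (unfold q0; ring1) | (unfold q; ring1))))
      · exact hmem (by simp only [Set.mem_insert_iff, Set.mem_singleton_iff]; exact Or.inr (Or.inr (Or.inr (Or.inr (Or.inr (Or.inr (Or.inl (by first | ring1 | (unfold q0 q; ring1) | (unfold q0; ring1) | (unfold q; ring1)))))))))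
      · exact hmem (by simp only [Set.mem_insert_iff, Set.mem_singleton_iff]; exact Or.inr (Or.inr (Or.inr (Or.inl (by first | ring1 | (unfold q0 q; ring1) | (unfold q0; ring1) | (unfold q; ring1))))))
      · exact hmem (by simp only [Set.mem_insert_iff, Set.mem_singleton_iff]; exact Or.inr (Or.inr (Or.inr (Or.inr (Or.inr (Or.inr (Or.inr (Or.inl (by first | ring1 | (unfold q0 q; ring1) | (unfold q0; ring1) | (unfold q; ring1))))))))))
    have cC : (((1*3^(2*s+1)+2*3^(3*s+1):ℕ)).choose i : F) = 0 := by
      by_contra h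
      obtain ⟨m, hm, j, hj, rfl⟩ := master_support 1 2 (2*s+1) (3*s+1) i (by norm_num) (by omega) h
      interval_cases m <;> interval_cases j
      · simp at hi1
      · exact hmem (by simp only [Set.mem_insert_iff, Set.mem_singleton_iff]; exact Or.inr (Or.inr (Or.inr (Or.inr (Or.inr (Or.inr (Or.inr (Or.inr (Or.inl (by first | ring1 | (unfold q0 q; ring1) | (unfold q0; ring1) | (unfold q; ring1)))))))))))
      · exact hmem (by simp only [Set.mem_insert_iff, Set.mem_singleton_iff]; exact Or.inr (Or.inr (Or.inr (Or.inr (Or.inr (Or.inr (Or.inr (Or.inr (Or.inr (Or.inr (Or.inl (by first | ring1 | (unfold q0 q; ring1) | (unfold q0; ring1) | (unfold q; ring1)))))))))))))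
      · exact hmem (by simp only [Set.mem_insert_iff, Set.mem_singleton_iff]; exact Or.inr (Or.inr (Or.inr (Or.inr (Or.inr (Or.inl (by first | ring1 | (unfold q0 q; ring1) | (unfold q0; ring1) | (unfold q; ring1))))))))
      · exact hmem (by simp only [Set.mem_insert_iff, Set.mem_singleton_iff]; exact Or.inr (Or.inr (Or.inr (Or.inr (Or.inr (Or.inr (Or.inr (Or.inr (Or.inr (Or.inl (by first | ring1 | (unfold q0 q; ring1) | (unfold q0; ring1) | (unfold q; ring1))))))))))))
      · exact hmem (by simp only [Set.mem_insert_iff, Set.mem_singleton_iff]; exact Or.inr (Or.inr (Or.inr (Or.inr (Or.inr (Or.inr (Or.inr (Or.inr (Or.inr (Or.inr (Or.inr ((by first | ring1 | (unfold q0 q; ring1) | (unfold q0; ring1) | (unfold q; ring1))))))))))))))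
    have cD : (((2*3^(3*s+1)+1*3^(4*s+2):ℕ)).choose i : F) = 0 := by
      by_contra h
      obtain ⟨m, hm, j, hj, rfl⟩ := master_support 2 1 (3*s+1) (4*s+2) i (by norm_num) (by omega) h
      interval_cases m <;> interval_cases j
      · simp at hi1
      · exfalso; rw [hQeq] at hi2; omega
      · exact hmem (by simp only [Set.mem_insert_iff, Set.mem_singleton_iff]; exact Or.inr (Or.inr (Or.inr (Or.inr (Or.inr (Or.inr (Or.inr (Or.inr (Or.inl (by first | ring1 | (unfold q0 q; ring1) | (unfold q0; ring1) | (unfold q; ring1)))))))))))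
      · exfalso; rw [hQeq] at hi2; omega
      · exact hmem (by simp only [Set.mem_insert_iff, Set.mem_singleton_iff]; exact Or.inr (Or.inr (Or.inr (Or.inr (Or.inr (Or.inr (Or.inr (Or.inr (Or.inr (Or.inr (Or.inl (by first | ring1 | (unfold q0 q; ring1) | (unfold q0; ring1) | (unfold q; ring1)))))))))))))
      · exfalso; rw [hQeq] at hi2; omega
    rw [hd_pZ s i, cA, cB, cC, cD]
    simp
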